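/- Every cycle of length 5 in the graph V8 has vertex set of the form {i, i+1, i+2, i+3, i+4} for some i ∈ ℤ/8ℤ; that is, if v0, v1, v2, v3, v4 are distinct vertices of ℤ/8ℤ with v_t adjacent to v_{t+1 (mod 5)} in V8 for all t, then there exists i ∈ ℤ/8ℤ with {v0, v1, v2, v3, v4} = {i, i+1, i+2, i+3, i+4}. -/
import Mathlib


/-- Adjacency in `V₈`, the four-rung Möbius ladder: `j` is adjacent to `j - 1`,
`j + 1` and `j + 4` (mod 8). -/
def V8Adj (i j : ZMod 8) : Prop := j = i + 1 ∨ i = j + 1 ∨ j = i + 4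

instance (i j : ZMod 8) : Decidable (V8Adj i j) := by unfold V8Adj; infer_instance

set_option maxRecDepth 100000 in
set_option maxHeartbeats 4000000 in
set_option synthInstance.maxSize 4000 in
set_option synthInstance.maxHeartbeats 1000000 in
lemma v8_aux : ∀ a b c d e : ZMod 8,
    a ≠ b → a ≠ c → a ≠ d → a ≠ e → b ≠ c → b ≠ d → b ≠ e → c ≠ d → c ≠ e → d ≠ e →
    V8Adj a b → V8Adj b c → V8Adj c d → V8Adj d e → V8Adj e a →
    ∃ i : ZMod 8, ∀ x : ZMod 8,
      (x = a ∨ x = b ∨ x = c ∨ x = d ∨ x = e) ↔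
      (x = i ∨ x = i+1 ∨ x = i+2 ∨ x = i+3 ∨ x = i+4) := by
  decide

/-- Every cycle of length 5 in the graph `V₈` has vertex set of the form
`{i, i+1, i+2, i+3, i+4}` for some `i`. -/
theorem v8_five_cycle_support
    (f : ZMod 5 → ZMod 8) (hinj : Function.Injective f)
    (hadj : ∀ t : ZMod 5, V8Adj (f t) (f (t + 1))) :
    ∃ i : ZMod 8, Set.range f = ({i, i + 1, i + 2, i + 3, i + 4} : Set (ZMod 8)) := by
  have hne : ∀ s t : ZMod 5, s ≠ t → f s ≠ f t := fun s t h hh => h (hinj hh)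
  have h01 : (1 : ZMod 5) = 0 + 1 := by decide
  have h12 : (2 : ZMod 5) = 1 + 1 := by decide
  have h23 : (3 : ZMod 5) = 2 + 1 := by decide
  have h34 : (4 : ZMod 5) = 3 + 1 := by decide
  have h40 : (0 : ZMod 5) = 4 + 1 := by decide
  obtain ⟨i, hi⟩ := v8_aux (f 0) (f 1) (f 2) (f 3) (f 4)
    (hne 0 1 (by decide)) (hne 0 2 (by decide)) (hne 0 3 (by decide)) (hne 0 4 (by decide))
    (hne 1 2 (by decide)) (hne 1 3 (by decide)) (hne 1 4 (by decide))
    (hne 2 3 (by decide)) (hne 2 4 (by decide)) (hne 3 4 (by decide))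
    (h01 ▸ hadj 0) (h12 ▸ hadj 1) (h23 ▸ hadj 2) (h34 ▸ hadj 3) (h40 ▸ hadj 4)
  refine ⟨i, Set.ext fun x => ?_⟩
  have htcases : ∀ t : ZMod 5, t = 0 ∨ t = 1 ∨ t = 2 ∨ t = 3 ∨ t = 4 := by decide
  constructor
  · rintro ⟨t, rfl⟩
    have hm : f t = f 0 ∨ f t = f 1 ∨ f t = f 2 ∨ f t = f 3 ∨ f t = f 4 := by
      rcases htcases t with h|h|h|h|h <;> subst h <;> tauto
    have := (hi (f t)).1 hm
    simpa [Set.mem_insert_iff] using this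
  · intro hx
    have hx' : x = i ∨ x = i+1 ∨ x = i+2 ∨ x = i+3 ∨ x = i+4 := by
      simpa [Set.mem_insert_iff] using hx
    rcases (hi x).2 hx' with h|h|h|h|h
    exacts [⟨0, h.symm⟩, ⟨1, h.symm⟩, ⟨2, h.symm⟩, ⟨3, h.symm⟩, ⟨4, h.symm⟩]
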